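/- arXiv:1105.1304 — 5 statements merged into one kernel-verified Lean document; each statement's English description precedes it below -/
import Mathlib

section
/- The extreme value distribution function F(s) = 1 − exp(−e^s) satisfies, for all v ∈ ℝ, f(v)² − ḟ(v)·F(v) > 0 and f(v)² + ḟ(v)·(1 − F(v)) > 0, where f = F' and ḟ = F''. -/
open Real

lemma hF_deriv (x : ℝ) :
    HasDerivAt (fun s => 1 - Real.exp (-(Real.exp s)))
      (Real.exp x * Real.exp (-(Real.exp x))) x := by
  have h1 : HasDerivAt (fun s : ℝ => -(Real.exp s)) (-(Real.exp x)) x :=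
    (Real.hasDerivAt_exp x).neg
  have h2 := h1.exp
  have h3 := (hasDerivAt_const x (1:ℝ)).sub h2
  refine h3.congr_deriv ?_
  ring

lemma hF_deriv2 (x : ℝ) :
    HasDerivAt (fun s => Real.exp s * Real.exp (-(Real.exp s)))
      ((1 - Real.exp x) * (Real.exp x * Real.exp (-(Real.exp x)))) x := by
  have h1 : HasDerivAt (fun s : ℝ => -(Real.exp s)) (-(Real.exp x)) x :=
    (Real.hasDerivAt_exp x).neg
  have h2 := (Real.hasDerivAt_exp x).mul h1.exp
  refine h2.congr_deriv ?_
  ring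

theorem extreme_value_satisfies_M4b :
    let F : ℝ → ℝ := fun s => 1 - Real.exp (-(Real.exp s))
    ∀ v : ℝ, (deriv F v) ^ 2 - (deriv (deriv F) v) * F v > 0 ∧
      (deriv F v) ^ 2 + (deriv (deriv F) v) * (1 - F v) > 0 := by
  intro F v
  have hdF : deriv F = fun s => Real.exp s * Real.exp (-(Real.exp s)) := by
    funext x; exact (hF_deriv x).deriv
  have hd2 : deriv (deriv F) v
      = (1 - Real.exp v) * (Real.exp v * Real.exp (-(Real.exp v))) := by
    rw [hdF]; exact (hF_deriv2 v).deriv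
  have hF1 : deriv F v = Real.exp v * Real.exp (-(Real.exp v)) := by rw [hdF]
  set e := Real.exp v with he
  set E := Real.exp (-e) with hE
  have hepos : 0 < e := Real.exp_pos v
  have hEpos : 0 < E := Real.exp_pos _
  have key : 1 - E < e := by
    have h := Real.add_one_lt_exp (x := -e) (by linarith)
    rw [← hE] at h
    linarith
  constructor
  · have : (deriv F v) ^ 2 - (deriv (deriv F) v) * F v
        = e * E * (e - (1 - E)) := by
      simp only [hF1, hd2, F]
      ring
    rw [this]
    have : 0 < e - (1 - E) := by linarith
    positivity
  · have : (deriv F v) ^ 2 + (deriv (deriv F) v) * (1 - F v) = e * E ^ 2 := by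
      simp only [hF1, hd2, F]
      ring
    rw [this]
    positivity
end

section
/- For every γ > 0, the Pareto-type distribution function F(s) = 1 − (1 + γe^s)^{−1/γ} satisfies, for all v ∈ ℝ, f(v)² + ḟ(v)·(1 − F(v)) > 0, where f = F' and ḟ = F''. -/
open Real

theorem pareto_satisfies_M4b_part (γ : ℝ) (hγ : 0 < γ) :
    let F : ℝ → ℝ := fun s => 1 - (1 + γ * Real.exp s) ^ (-(1 / γ))
    ∀ v : ℝ, (deriv F v) ^ 2 + (deriv (deriv F) v) * (1 - F v) > 0 := by
  intro F v
  have hu : ∀ s : ℝ, (0:ℝ) < 1 + γ * Real.exp s := fun s => by positivity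
  have hud : ∀ s : ℝ, HasDerivAt (fun s => 1 + γ * Real.exp s) (γ * Real.exp s) s := by
    intro s
    simpa using ((Real.hasDerivAt_exp s).const_mul γ).const_add 1
  set p : ℝ := -(1/γ) with hp
  have hF' : deriv F = fun s => Real.exp s * (1 + γ * Real.exp s) ^ (p - 1) := by
    funext s
    have h1 : HasDerivAt F (Real.exp s * (1 + γ * Real.exp s) ^ (p - 1)) s := by
      have h0 := (hud s).rpow_const (p := p) (Or.inl (hu s).ne')
      have h2 := (hasDerivAt_const s (1:ℝ)).sub h0
      refine h2.congr_deriv ?_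
      rw [hp]
      field_simp
      ring
    exact h1.deriv
  have hg : HasDerivAt (fun s => Real.exp s * (1 + γ * Real.exp s) ^ (p - 1))
      (Real.exp v * (1 + γ * Real.exp v) ^ (p - 1)
        + Real.exp v * (γ * Real.exp v * (p - 1) * (1 + γ * Real.exp v) ^ (p - 1 - 1))) v :=
    (Real.hasDerivAt_exp v).mul ((hud v).rpow_const (Or.inl (hu v).ne'))
  have hF'' : deriv (deriv F) v = Real.exp v * (1 + γ * Real.exp v) ^ (p - 1)
        + Real.exp v * (γ * Real.exp v * (p - 1) * (1 + γ * Real.exp v) ^ (p - 1 - 1)) := by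
    rw [hF']
    exact hg.deriv
  have hFv : 1 - F v = (1 + γ * Real.exp v) ^ p := by
    show 1 - (1 - (1 + γ * Real.exp v) ^ (-(1/γ))) = _
    rw [hp]; ring
  have hA : (1 + γ * Real.exp v) ^ (p - 1) = (1 + γ * Real.exp v) ^ (p - 1 - 1) * (1 + γ * Real.exp v) := by
    rw [← Real.rpow_add_one (hu v).ne']
    ring_nf
  have hP : (1 + γ * Real.exp v) ^ p = (1 + γ * Real.exp v) ^ (p - 1) * (1 + γ * Real.exp v) := by
    rw [← Real.rpow_add_one (hu v).ne']
    ring_nf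
  have hpγ : (p - 1) * γ = -1 - γ := by
    rw [hp]; field_simp
  have key : (deriv F v) ^ 2 + (deriv (deriv F) v) * (1 - F v)
      = Real.exp v * ((1 + γ * Real.exp v) ^ (p - 1 - 1) * (1 + γ * Real.exp v)) ^ 2 := by
    rw [hF'', hFv, hF']; beta_reduce; rw [hP, hA]
    linear_combination ((1 + γ * Real.exp v) ^ (p - 1 - 1))^2 * (1 + γ * Real.exp v)^2
      * (Real.exp v)^2 * hpγ
  rw [key]
  positivity
end

section
/- Let q(δ, t) = δ log F(t) + (1 − δ) log(1 − F(t)) where F : ℝ → (0,1) is twice continuously differentiable, and suppose on a compact interval I there are constants 0 < c₁ ≤ −∂²q(δ,t)/∂t² ≤ c₂ < ∞ for δ ∈ {0,1} and t ∈ I. Let X be a random element, θ, θ₀ measurable functions into I, and Δ a {0,1}-valued random variable with E[Δ | X] = F(θ₀(X)). Then (c₁/2)·E[(θ(X) − θ₀(X))²] ≤ E[q(Δ, θ₀(X)) − q(Δ, θ(X))] ≤ (c₂/2)·E[(θ(X) − θ₀(X))²]. -/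
open MeasureTheory Set

private lemma iteratedDeriv_two' (f : ℝ → ℝ) :
    iteratedDeriv 2 f = deriv (deriv f) := by
  rw [show (2:ℕ) = 1 + 1 from rfl, iteratedDeriv_succ, iteratedDeriv_one]

private lemma mono_min {a b s t : ℝ} (g g' : ℝ → ℝ) (hg : ∀ x, HasDerivAt g (g' x) x)
    (hs : s ∈ Icc a b) (ht : t ∈ Icc a b) (hs0 : g' s = 0)
    (hmono : MonotoneOn g' (Icc a b)) : g s ≤ g t := by
  have hd : Differentiable ℝ g := fun x => (hg x).differentiableAt
  have hderiv : deriv g = g' := funext fun x => (hg x).deriv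
  rcases le_total s t with h | h
  · have hIcc : Icc s t ⊆ Icc a b := Icc_subset_Icc hs.1 ht.2
    have hm : MonotoneOn g (Icc s t) := by
      apply monotoneOn_of_deriv_nonneg (convex_Icc s t) hd.continuous.continuousOn
        hd.differentiableOn
      intro x hx
      rw [interior_Icc] at hx
      rw [hderiv, ← hs0]
      exact hmono hs (hIcc ⟨hx.1.le, hx.2.le⟩) hx.1.le
    exact hm ⟨le_rfl, h⟩ ⟨h, le_rfl⟩ h
  · have hIcc : Icc t s ⊆ Icc a b := Icc_subset_Icc ht.1 hs.2
    have hm : AntitoneOn g (Icc t s) := by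
      apply antitoneOn_of_deriv_nonpos (convex_Icc t s) hd.continuous.continuousOn
        hd.differentiableOn
      intro x hx
      rw [interior_Icc] at hx
      rw [hderiv, ← hs0]
      exact hmono (hIcc ⟨hx.1.le, hx.2.le⟩) hs hx.2.le
    exact hm ⟨le_rfl, h⟩ ⟨h, le_rfl⟩ h

private lemma quad_upper {a b s t hi : ℝ} (f f' f'' : ℝ → ℝ)
    (hf : ∀ x, HasDerivAt f (f' x) x) (hf' : ∀ x, HasDerivAt f' (f'' x) x)
    (hs : s ∈ Icc a b) (ht : t ∈ Icc a b) (hs0 : f' s = 0)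
    (hb : ∀ x ∈ Icc a b, f'' x ≤ hi) : f t - f s ≤ hi / 2 * (t - s) ^ 2 := by
  set g : ℝ → ℝ := fun x => hi / 2 * (x - s) ^ 2 - (f x - f s) with hgdef
  set g' : ℝ → ℝ := fun x => hi * (x - s) - f' x with hg'def
  have hg : ∀ x, HasDerivAt g (g' x) x := by
    intro x
    have h1 : HasDerivAt (fun x : ℝ => hi / 2 * (x - s) ^ 2) (hi * (x - s)) x := by
      have := (((hasDerivAt_id x).sub_const s).pow 2).const_mul (hi / 2)
      refine this.congr_deriv ?_
      simp [id]
      ring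
    exact h1.sub ((hf x).sub_const (f s))
  have hgd' : ∀ x, HasDerivAt g' (hi - f'' x) x := by
    intro x
    have h1 : HasDerivAt (fun x : ℝ => hi * (x - s)) hi x := by
      have := ((hasDerivAt_id x).sub_const s).const_mul hi
      refine this.congr_deriv ?_
      simp [id]
    exact h1.sub (hf' x)
  have hmono : MonotoneOn g' (Icc a b) := by
    apply monotoneOn_of_deriv_nonneg (convex_Icc a b)
      (fun x _ => ((hgd' x).differentiableAt).continuousAt.continuousWithinAt)
      (fun x _ => ((hgd' x).differentiableAt).differentiableWithinAt)
    intro x hx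
    rw [interior_Icc] at hx
    rw [(hgd' x).deriv]
    have := hb x ⟨hx.1.le, hx.2.le⟩
    linarith
  have hg's : g' s = 0 := by simp [hg'def, hs0]
  have := mono_min g g' hg hs ht hg's hmono
  have hgs : g s = 0 := by simp [hgdef]
  rw [hgs] at this
  simp only [hgdef] at this
  linarith

private lemma quad_bound {a b s t lo hi : ℝ} (f f' f'' : ℝ → ℝ)
    (hf : ∀ x, HasDerivAt f (f' x) x) (hf' : ∀ x, HasDerivAt f' (f'' x) x)
    (hs : s ∈ Icc a b) (ht : t ∈ Icc a b) (hs0 : f' s = 0)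
    (hb : ∀ x ∈ Icc a b, lo ≤ f'' x ∧ f'' x ≤ hi) :
    lo / 2 * (t - s) ^ 2 ≤ f t - f s ∧ f t - f s ≤ hi / 2 * (t - s) ^ 2 := by
  constructor
  · have := quad_upper (hi := -lo) (fun x => -f x) (fun x => -f' x) (fun x => -f'' x)
      (fun x => (hf x).neg) (fun x => (hf' x).neg) hs ht (by simp [hs0])
      (fun x hx => by have := (hb x hx).1; linarith)
    have h2 : -lo / 2 * (t - s) ^ 2 = -(lo / 2 * (t - s) ^ 2) := by ring
    rw [h2] at this
    linarith
  · exact quad_upper f f' f'' hf hf' hs ht hs0 (fun x hx => (hb x hx).2)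

theorem quadratic_curvature_bound
    {Ω : Type*} [m0 : MeasurableSpace Ω] (μ : Measure Ω) [IsProbabilityMeasure μ]
    (F : ℝ → ℝ) (hF : ContDiff ℝ 2 F) (hF01 : ∀ t, 0 < F t ∧ F t < 1)
    (q : ℝ → ℝ → ℝ)
    (hq : ∀ δ t, q δ t = δ * Real.log (F t) + (1 - δ) * Real.log (1 - F t))
    (a b : ℝ) (hab : a ≤ b) (c₁ c₂ : ℝ) (hc₁ : 0 < c₁) (hc₂ : c₁ ≤ c₂)
    (hcurv : ∀ δ : ℝ, δ = 0 ∨ δ = 1 → ∀ t ∈ Icc a b,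
      c₁ ≤ -(iteratedDeriv 2 (q δ) t) ∧ -(iteratedDeriv 2 (q δ) t) ≤ c₂)
    (X : Ω → ℝ) (hX : Measurable X)
    (θ θ₀ : ℝ → ℝ) (hθ : Measurable θ) (hθ₀ : Measurable θ₀)
    (hθrange : ∀ x, θ x ∈ Icc a b) (hθ₀range : ∀ x, θ₀ x ∈ Icc a b)
    (Δ : Ω → ℝ) (hΔ : Measurable Δ) (hΔ01 : ∀ ω, Δ ω = 0 ∨ Δ ω = 1)
    (hcond : μ[Δ | MeasurableSpace.comap X (borel ℝ)] =ᵐ[μ] fun ω => F (θ₀ (X ω))) :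
    c₁ / 2 * (∫ ω, (θ (X ω) - θ₀ (X ω)) ^ 2 ∂μ) ≤
      (∫ ω, (q (Δ ω) (θ₀ (X ω)) - q (Δ ω) (θ (X ω))) ∂μ) ∧
    (∫ ω, (q (Δ ω) (θ₀ (X ω)) - q (Δ ω) (θ (X ω))) ∂μ) ≤
      c₂ / 2 * (∫ ω, (θ (X ω) - θ₀ (X ω)) ^ 2 ∂μ) := by
  classical
  have hFne : ∀ t, F t ≠ 0 := fun t => (hF01 t).1.ne'
  have hFne1 : ∀ t, (1:ℝ) - F t ≠ 0 := fun t => by have := (hF01 t).2; intro h; linarith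
  set g1 : ℝ → ℝ := fun t => Real.log (F t) with hg1def
  set g0 : ℝ → ℝ := fun t => Real.log (1 - F t) with hg0def
  have hg1 : ContDiff ℝ 2 g1 := hF.log hFne
  have hg0 : ContDiff ℝ 2 g0 := (contDiff_const.sub hF).log hFne1
  have hq1 : q 1 = g1 := funext fun t => by rw [hq]; simp [hg1def]
  have hq0 : q 0 = g0 := funext fun t => by rw [hq]; simp [hg0def]
  have hFd : ∀ x, HasDerivAt F (deriv F x) x :=
    fun x => ((hF.differentiable (by norm_num)) x).hasDerivAt
  have hg1d : ∀ x, HasDerivAt g1 (deriv g1 x) x :=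
    fun x => ((hg1.differentiable (by norm_num)) x).hasDerivAt
  have hg0d : ∀ x, HasDerivAt g0 (deriv g0 x) x :=
    fun x => ((hg0.differentiable (by norm_num)) x).hasDerivAt
  have hdg1 : Differentiable ℝ (deriv g1) := by
    have h := (contDiff_succ_iff_deriv.mp (show ContDiff ℝ (1 + 1) g1 by
      norm_num; exact hg1)).2.2
    exact h.differentiable (by norm_num)
  have hdg0 : Differentiable ℝ (deriv g0) := by
    have h := (contDiff_succ_iff_deriv.mp (show ContDiff ℝ (1 + 1) g0 by
      norm_num; exact hg0)).2.2
    exact h.differentiable (by norm_num)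
  have hdg1d : ∀ x, HasDerivAt (deriv g1) (deriv (deriv g1) x) x :=
    fun x => (hdg1 x).hasDerivAt
  have hdg0d : ∀ x, HasDerivAt (deriv g0) (deriv (deriv g0) x) x :=
    fun x => (hdg0 x).hasDerivAt
  have hdg1eq : ∀ x, deriv g1 x = deriv F x / F x :=
    fun x => ((hFd x).log (hFne x)).deriv
  have hdg0eq : ∀ x, deriv g0 x = -deriv F x / (1 - F x) := by
    intro x
    have h : HasDerivAt (fun t => 1 - F t) (-deriv F x) x := by
      exact (hFd x).const_sub 1
    have := (h.log (hFne1 x)).deriv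
    simpa [hg0def] using this
  have hcurv1 : ∀ t ∈ Icc a b, c₁ ≤ -(deriv (deriv g1) t) ∧ -(deriv (deriv g1) t) ≤ c₂ := by
    intro t ht
    have := hcurv 1 (Or.inr rfl) t ht
    rwa [hq1, iteratedDeriv_two'] at this
  have hcurv0 : ∀ t ∈ Icc a b, c₁ ≤ -(deriv (deriv g0) t) ∧ -(deriv (deriv g0) t) ≤ c₂ := by
    intro t ht
    have := hcurv 0 (Or.inl rfl) t ht
    rwa [hq0, iteratedDeriv_two'] at this
  have claimA : ∀ s ∈ Icc a b, ∀ t ∈ Icc a b,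
      c₁ / 2 * (t - s) ^ 2 ≤ F s * (g1 s - g1 t) + (1 - F s) * (g0 s - g0 t) ∧
      F s * (g1 s - g1 t) + (1 - F s) * (g0 s - g0 t) ≤ c₂ / 2 * (t - s) ^ 2 := by
    intro s hsmem t htmem
    set f : ℝ → ℝ := fun u => -(F s * g1 u + (1 - F s) * g0 u) with hfdef
    set f' : ℝ → ℝ := fun u => -(F s * deriv g1 u + (1 - F s) * deriv g0 u) with hf'def
    set f'' : ℝ → ℝ := fun u => -(F s * deriv (deriv g1) u + (1 - F s) * deriv (deriv g0) u)
      with hf''def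
    have hfd : ∀ x, HasDerivAt f (f' x) x :=
      fun x => (((hg1d x).const_mul (F s)).add ((hg0d x).const_mul (1 - F s))).neg
    have hfd' : ∀ x, HasDerivAt f' (f'' x) x :=
      fun x => (((hdg1d x).const_mul (F s)).add ((hdg0d x).const_mul (1 - F s))).neg
    have hf's : f' s = 0 := by
      simp only [hf'def, hdg1eq, hdg0eq]
      field_simp [hFne s, hFne1 s]
      ring
    have hbb : ∀ x ∈ Icc a b, c₁ ≤ f'' x ∧ f'' x ≤ c₂ := by
      intro x hx
      have h1 := hcurv1 x hx
      have h0 := hcurv0 x hx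
      have hFs := hF01 s
      constructor <;> simp only [hf''def] <;>
        nlinarith [h1.1, h1.2, h0.1, h0.2, hFs.1, hFs.2]
    have hqb := quad_bound f f' f'' hfd hfd' hsmem htmem hf's hbb
    have heq : f t - f s = F s * (g1 s - g1 t) + (1 - F s) * (g0 s - g0 t) := by
      simp only [hfdef]; ring
    rw [heq] at hqb
    exact hqb
  -- measure-theoretic part
  have hm : MeasurableSpace.comap X (borel ℝ) ≤ m0 := measurable_iff_comap_le.mp hX
  obtain ⟨C₁, hC₁⟩ := isCompact_Icc.exists_bound_of_continuousOn (s := Icc a b)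
    hg1.continuous.continuousOn
  obtain ⟨C₀, hC₀⟩ := isCompact_Icc.exists_bound_of_continuousOn (s := Icc a b)
    hg0.continuous.continuousOn
  have hmeasθX : Measurable fun ω => θ (X ω) := hθ.comp hX
  have hmeasθ₀X : Measurable fun ω => θ₀ (X ω) := hθ₀.comp hX
  set A : Ω → ℝ := fun ω => g1 (θ₀ (X ω)) - g1 (θ (X ω)) with hAdef
  set B : Ω → ℝ := fun ω => g0 (θ₀ (X ω)) - g0 (θ (X ω)) with hBdef
  set W : Ω → ℝ := fun ω => A ω - B ω with hWdef
  set R : Ω → ℝ := fun ω => F (θ₀ (X ω)) with hRdef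
  set M : Ω → ℝ := fun ω => R ω * A ω + (1 - R ω) * B ω with hMdef
  set sq : Ω → ℝ := fun ω => (θ (X ω) - θ₀ (X ω)) ^ 2 with hsqdef
  have hAm : Measurable A :=
    (hg1.continuous.measurable.comp hmeasθ₀X).sub (hg1.continuous.measurable.comp hmeasθX)
  have hBm : Measurable B :=
    (hg0.continuous.measurable.comp hmeasθ₀X).sub (hg0.continuous.measurable.comp hmeasθX)
  have hWm : Measurable W := hAm.sub hBm
  have hRm : Measurable R := hF.continuous.measurable.comp hmeasθ₀X
  have hMm : Measurable M := (hRm.mul hAm).add ((measurable_const.sub hRm).mul hBm)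
  have hsqm : Measurable sq := (hmeasθX.sub hmeasθ₀X).pow_const 2
  have hAb : ∀ ω, |A ω| ≤ C₁ + C₁ := by
    intro ω
    have h1 := hC₁ _ (hθ₀range (X ω))
    have h2 := hC₁ _ (hθrange (X ω))
    rw [Real.norm_eq_abs] at h1 h2
    calc |A ω| ≤ |g1 (θ₀ (X ω))| + |g1 (θ (X ω))| := abs_sub _ _
      _ ≤ C₁ + C₁ := by linarith
  have hBb : ∀ ω, |B ω| ≤ C₀ + C₀ := by
    intro ω
    have h1 := hC₀ _ (hθ₀range (X ω))
    have h2 := hC₀ _ (hθrange (X ω))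
    rw [Real.norm_eq_abs] at h1 h2
    calc |B ω| ≤ |g0 (θ₀ (X ω))| + |g0 (θ (X ω))| := abs_sub _ _
      _ ≤ C₀ + C₀ := by linarith
  have hWb : ∀ ω, |W ω| ≤ (C₁ + C₁) + (C₀ + C₀) := by
    intro ω
    calc |W ω| ≤ |A ω| + |B ω| := abs_sub _ _
      _ ≤ (C₁ + C₁) + (C₀ + C₀) := add_le_add (hAb ω) (hBb ω)
  have hΔb : ∀ ω, |Δ ω| ≤ 1 := by
    intro ω; rcases hΔ01 ω with h | h <;> simp [h]
  have hRb : ∀ ω, |R ω| ≤ 1 := by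
    intro ω
    have := hF01 (θ₀ (X ω))
    rw [abs_of_pos this.1]
    exact this.2.le
  have intbd : ∀ (f : Ω → ℝ) (C : ℝ), Measurable f → (∀ ω, |f ω| ≤ C) → Integrable f μ :=
    fun f C hf hC => ⟨hf.aestronglyMeasurable,
      HasFiniteIntegral.of_bounded (C := C) (ae_of_all _ fun ω => by
        simpa [Real.norm_eq_abs] using hC ω)⟩
  have hΔint : Integrable Δ μ := intbd Δ 1 hΔ hΔb
  have hWΔint : Integrable (W * Δ) μ := by
    refine intbd _ ((C₁ + C₁) + (C₀ + C₀)) (hWm.mul hΔ) fun ω => ?_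
    have h1 := hWb ω
    have h2 := hΔb ω
    have h3 : |(W * Δ) ω| = |W ω| * |Δ ω| := abs_mul _ _
    nlinarith [abs_nonneg (W ω), abs_nonneg (Δ ω)]
  have hWRint : Integrable (fun ω => W ω * R ω) μ := by
    refine intbd _ ((C₁ + C₁) + (C₀ + C₀)) (hWm.mul hRm) fun ω => ?_
    have h1 := hWb ω
    have h2 := hRb ω
    have h3 : |W ω * R ω| = |W ω| * |R ω| := abs_mul _ _
    nlinarith [abs_nonneg (W ω), abs_nonneg (R ω)]
  have hMint : Integrable M μ := by
    refine intbd M ((C₁ + C₁) + (C₀ + C₀)) hMm fun ω => ?_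
    have hA := hAb ω
    have hB := hBb ω
    have hR := hF01 (θ₀ (X ω))
    have e1 : |M ω| ≤ |R ω * A ω| + |(1 - R ω) * B ω| := abs_add_le _ _
    rw [abs_mul, abs_mul, abs_of_pos hR.1, abs_of_pos (by linarith : (0:ℝ) < 1 - R ω)] at e1
    nlinarith [abs_nonneg (A ω), abs_nonneg (B ω)]
  have hsqb : ∀ ω, |sq ω| ≤ (b - a) ^ 2 := by
    intro ω
    have ht := hθrange (X ω)
    have hs := hθ₀range (X ω)
    have e : sq ω = (θ (X ω) - θ₀ (X ω)) ^ 2 := rfl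
    rw [e, abs_of_nonneg (sq_nonneg _)]
    nlinarith [ht.1, ht.2, hs.1, hs.2]
  have hsqint : Integrable sq μ := intbd sq ((b - a) ^ 2) hsqm hsqb
  -- conditional expectation pull-out
  have hXm : Measurable[MeasurableSpace.comap X (borel ℝ)] X := fun s hs => ⟨s, hs, rfl⟩
  have hGm : Measurable fun x : ℝ => (g1 (θ₀ x) - g1 (θ x)) - (g0 (θ₀ x) - g0 (θ x)) :=
    ((hg1.continuous.measurable.comp hθ₀).sub (hg1.continuous.measurable.comp hθ)).sub
      ((hg0.continuous.measurable.comp hθ₀).sub (hg0.continuous.measurable.comp hθ))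
  have hWsm : StronglyMeasurable[MeasurableSpace.comap X (borel ℝ)] W := (hGm.comp hXm).stronglyMeasurable
  haveI : SigmaFinite (μ.trim hm) := inferInstance
  have hpull := condExp_mul_of_stronglyMeasurable_left hWsm hWΔint hΔint
  have hkey : ∫ ω, W ω * Δ ω ∂μ = ∫ ω, W ω * R ω ∂μ := by
    have h1 : ∫ ω, W ω * Δ ω ∂μ = ∫ ω, (μ[W * Δ|MeasurableSpace.comap X (borel ℝ)]) ω ∂μ := (integral_condExp hm).symm
    rw [h1]
    refine integral_congr_ae ?_
    filter_upwards [hpull, hcond] with ω h h'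
    rw [h]
    simp only [Pi.mul_apply]
    rw [h']
  have hL : (fun ω => q (Δ ω) (θ₀ (X ω)) - q (Δ ω) (θ (X ω)))
      = fun ω => M ω + (W ω * Δ ω - W ω * R ω) := by
    funext ω
    rw [hq, hq]
    simp only [hMdef, hWdef, hAdef, hBdef, hRdef, hg1def, hg0def]
    ring
  have hint_eq : (∫ ω, (q (Δ ω) (θ₀ (X ω)) - q (Δ ω) (θ (X ω))) ∂μ) = ∫ ω, M ω ∂μ := by
    have hWΔint' : Integrable (fun ω => W ω * Δ ω) μ := hWΔint
    have h2 : Integrable (fun ω => W ω * Δ ω - W ω * R ω) μ := hWΔint'.sub hWRint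
    rw [hL]
    rw [integral_add hMint h2, integral_sub hWΔint' hWRint, hkey]
    ring
  have hsand : ∀ ω, c₁ / 2 * sq ω ≤ M ω ∧ M ω ≤ c₂ / 2 * sq ω := fun ω =>
    claimA (θ₀ (X ω)) (hθ₀range _) (θ (X ω)) (hθrange _)
  constructor
  · rw [hint_eq, ← integral_const_mul]
    exact integral_mono (hsqint.const_mul _) hMint (fun ω => (hsand ω).1)
  · rw [hint_eq, ← integral_const_mul]
    exact integral_mono hMint (hsqint.const_mul _) (fun ω => (hsand ω).2)
end

section
/- Let V and W = (W₁,…,W_d) be random variables such that the joint density of (V, W) on [l,u] × [0,1]^d with respect to Lebesgue measure is bounded below by m > 0 and above by M < ∞. Suppose h_j : [0,1] → ℝ are square-integrable with ∫₀¹ h_j(w) dw = 0 for each j, and H : [l,u] → ℝ is square-integrable. If E[(H(V) + Σ_{j=1}^d h_j(W_j))²] = 0, then H = 0 a.e. and each h_j = 0 a.e. -/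
open MeasureTheory Set

lemma aux_restrict_pi_pi {ι : Type*} [Fintype ι] {α : Type*} [MeasurableSpace α]
    (μ : ι → Measure α) [∀ i, SigmaFinite (μ i)] (t : ι → Set α)
    (ht : ∀ i, MeasurableSet (t i)) :
    (Measure.pi μ).restrict (Set.pi univ t) = Measure.pi (fun i => (μ i).restrict (t i)) := by
  haveI : ∀ i, SigmaFinite ((μ i).restrict (t i)) := fun i => inferInstance
  refine (Measure.pi_eq fun s hs => ?_).symm
  rw [Measure.restrict_apply (MeasurableSet.univ_pi hs), ← Set.pi_inter_distrib,
    Measure.pi_pi]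
  exact Finset.prod_congr rfl fun i _ => (Measure.restrict_apply (hs i)).symm

lemma aux_map_eval_pi {ι : Type*} [Fintype ι] [DecidableEq ι] {α : Type*} [MeasurableSpace α]
    (ν : ι → Measure α) [∀ i, IsProbabilityMeasure (ν i)] (j : ι) :
    (Measure.pi ν).map (fun x => x j) = ν j := by
  ext s hs
  rw [Measure.map_apply (measurable_pi_apply j) hs]
  have : (fun x : ι → α => x j) ⁻¹' s = Set.pi univ (Function.update (fun _ => univ) j s) :=
    Set.eval_preimage
  rw [this, Measure.pi_pi]
  rw [← Finset.mul_prod_erase _ _ (Finset.mem_univ j), Function.update_self]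
  rw [Finset.prod_eq_one fun i hi => ?_, mul_one]
  rw [Function.update_of_ne (Finset.ne_of_mem_erase hi)]
  exact measure_univ

lemma aux_map_pair_eval_pi {ι : Type*} [Fintype ι] [DecidableEq ι] {α : Type*} [MeasurableSpace α]
    (ν : ι → Measure α) [∀ i, IsProbabilityMeasure (ν i)] {j k : ι} (hjk : j ≠ k) :
    (Measure.pi ν).map (fun x => (x j, x k)) = (ν j).prod (ν k) := by
  refine (Measure.prod_eq fun s t hs ht => ?_).symm
  rw [Measure.map_apply (by fun_prop) (hs.prod ht)]
  have hpre : (fun x : ι → α => (x j, x k)) ⁻¹' (s ×ˢ t)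
      = Set.pi univ (Function.update (Function.update (fun _ => univ) j s) k t) := by
    ext x
    simp only [Set.mem_preimage, Set.mem_prod, Set.mem_pi, Set.mem_univ, true_implies,
      Function.update_apply]
    constructor
    · rintro ⟨h1, h2⟩ i
      split_ifs with hik hij
      · exact hik ▸ h2
      · exact hij ▸ h1
      · trivial
    · intro hx
      refine ⟨?_, ?_⟩
      · have := hx j; simpa [hjk] using this
      · have := hx k; simpa using this
  rw [hpre, Measure.pi_pi]
  rw [← Finset.mul_prod_erase _ _ (Finset.mem_univ k), Function.update_self]
  have hjmem : j ∈ Finset.univ.erase k := Finset.mem_erase.2 ⟨hjk, Finset.mem_univ j⟩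
  rw [← Finset.mul_prod_erase _ _ hjmem, Function.update_of_ne hjk, Function.update_self]
  rw [Finset.prod_eq_one fun i hi => ?_, mul_one, mul_comm]
  have hij : i ≠ j := Finset.ne_of_mem_erase hi
  have hik : i ≠ k := Finset.ne_of_mem_erase (Finset.mem_of_mem_erase hi)
  rw [Function.update_of_ne hik, Function.update_of_ne hij]
  exact measure_univ

theorem additive_components_identifiability
    {Ω : Type*} [m0 : MeasurableSpace Ω] (μ : Measure Ω) [IsProbabilityMeasure μ]
    (d : ℕ) (l u : ℝ) (hlu : l < u) (m M : ℝ) (hm : 0 < m) (hM : m ≤ M)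
    (V : Ω → ℝ) (hV : Measurable V) (W : Ω → Fin d → ℝ) (hW : Measurable W)
    (ρ : ℝ × (Fin d → ℝ) → ℝ) (hρm : Measurable ρ)
    (hlaw : μ.map (fun ω => (V ω, W ω)) =
      (volume : Measure (ℝ × (Fin d → ℝ))).withDensity
        (fun p => ENNReal.ofReal (ρ p)))
    (hρbound : ∀ p ∈ (Icc l u) ×ˢ (univ.pi fun _ : Fin d => Icc (0:ℝ) 1),
      m ≤ ρ p ∧ ρ p ≤ M)
    (hρzero : ∀ p ∉ (Icc l u) ×ˢ (univ.pi fun _ : Fin d => Icc (0:ℝ) 1), ρ p = 0)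
    (h : Fin d → ℝ → ℝ) (hhm : ∀ j, Measurable (h j))
    (hhL2 : ∀ j, MemLp (h j) 2 (volume.restrict (Icc (0:ℝ) 1)))
    (hhmean : ∀ j, (∫ w in Icc (0:ℝ) 1, h j w) = 0)
    (H : ℝ → ℝ) (hHm : Measurable H)
    (hHL2 : MemLp H 2 (volume.restrict (Icc l u)))
    (hzero : (∫ ω, (H (V ω) + ∑ j, h j (W ω j)) ^ 2 ∂μ) = 0) :
    (∀ᵐ v ∂(volume.restrict (Icc l u)), H v = 0) ∧
    ∀ j, ∀ᵐ w ∂(volume.restrict (Icc (0:ℝ) 1)), h j w = 0 := by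
  classical
  set α : Measure ℝ := volume.restrict (Icc l u) with hαdef
  set ν : Measure ℝ := volume.restrict (Icc (0:ℝ) 1) with hνdef
  set β : Measure (Fin d → ℝ) := Measure.pi fun _ => ν with hβdef
  haveI hνprob : IsProbabilityMeasure ν := by
    constructor
    rw [hνdef, Measure.restrict_apply_univ, Real.volume_Icc]
    norm_num
  haveI hβprob : IsProbabilityMeasure β := by rw [hβdef]; infer_instance
  haveI hαfin : IsFiniteMeasure α := by
    constructor
    rw [hαdef, Measure.restrict_apply_univ, Real.volume_Icc]
    exact ENNReal.ofReal_lt_top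
  set B : Set (ℝ × (Fin d → ℝ)) := (Icc l u) ×ˢ (univ.pi fun _ : Fin d => Icc (0:ℝ) 1)
    with hBdef
  have hBmeas : MeasurableSet B :=
    measurableSet_Icc.prod (MeasurableSet.univ_pi fun _ => measurableSet_Icc)
  set F : ℝ × (Fin d → ℝ) → ℝ := fun p => H p.1 + ∑ j, h j (p.2 j) with hFdef
  have hFmeas : Measurable F := by
    apply (hHm.comp measurable_fst).add
    exact Finset.measurable_sum _ fun j _ =>
      (hhm j).comp ((measurable_pi_apply j).comp measurable_snd)
  have hρ0 : ∀ p, 0 ≤ ρ p := by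
    intro p
    by_cases hp : p ∈ B
    · exact le_trans hm.le (hρbound p hp).1
    · rw [hρzero p hp]
  -- product decomposition of the restricted volume
  have hrestr : (volume : Measure (ℝ × (Fin d → ℝ))).restrict B = α.prod β := by
    rw [hBdef, Measure.volume_eq_prod, ← Measure.prod_restrict]
    congr 1
    rw [volume_pi, aux_restrict_pi_pi _ _ fun i => measurableSet_Icc]
  -- F is in L² of the product
  have hmap_fst : Measure.map Prod.fst (α.prod β) = α := by
    rw [Measure.map_fst_prod, measure_univ, one_smul]
  have hH2 : MemLp (fun p : ℝ × (Fin d → ℝ) => H p.1) 2 (α.prod β) :=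
    hHL2.comp_measurePreserving ⟨measurable_fst, hmap_fst⟩
  have hmap_evalsnd : ∀ j, Measure.map (fun p : ℝ × (Fin d → ℝ) => p.2 j) (α.prod β)
      = (α univ) • ν := by
    intro j
    rw [show (fun p : ℝ × (Fin d → ℝ) => p.2 j) = (fun w : Fin d → ℝ => w j) ∘ Prod.snd from rfl,
      ← Measure.map_map (measurable_pi_apply j) measurable_snd, Measure.map_snd_prod,
      Measure.map_smul, hβdef, aux_map_eval_pi]
  have hh2 : ∀ j, MemLp (fun p : ℝ × (Fin d → ℝ) => h j (p.2 j)) 2 (α.prod β) := by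
    intro j
    refine MemLp.comp_of_map ?_ (by fun_prop)
    rw [hmap_evalsnd j]
    exact (hhL2 j).smul_measure (measure_ne_top α univ)
  have hF2 : MemLp F 2 (α.prod β) := hH2.add (memLp_finset_sum _ fun j _ => hh2 j)
  -- integrability of F² against the density
  have hFsq_int_B : IntegrableOn (fun p => F p ^ 2) B volume := by
    rw [IntegrableOn, hrestr]
    exact hF2.integrable_sq
  have hInt_dens : Integrable (fun p => F p ^ 2 * ρ p) volume := by
    have hbound : Integrable (B.indicator fun p => M * F p ^ 2) volume :=
      (integrable_indicator_iff hBmeas).mpr (hFsq_int_B.const_mul M)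
    refine hbound.mono' ((hFmeas.pow_const 2).mul hρm).aestronglyMeasurable ?_
    refine Filter.Eventually.of_forall fun p => ?_
    by_cases hp : p ∈ B
    · rw [Set.indicator_of_mem hp]
      have h1 := (hρbound p hp).2
      rw [Real.norm_eq_abs, abs_of_nonneg (mul_nonneg (sq_nonneg _) (hρ0 p))]
      nlinarith [sq_nonneg (F p)]
    · rw [Set.indicator_of_notMem hp, hρzero p hp, mul_zero, norm_zero]
  have hκint : Integrable (fun p => F p ^ 2)
      ((volume : Measure (ℝ × (Fin d → ℝ))).withDensity fun p => ENNReal.ofReal (ρ p)) := by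
    rw [integrable_withDensity_iff hρm.ennreal_ofReal
      (Filter.Eventually.of_forall fun p => ENNReal.ofReal_lt_top)]
    have : (fun p => F p ^ 2 * (ENNReal.ofReal (ρ p)).toReal) = fun p => F p ^ 2 * ρ p :=
      funext fun p => by rw [ENNReal.toReal_ofReal (hρ0 p)]
    rw [this]
    exact hInt_dens
  -- integrability of the squared sum and a.e. vanishing
  have hTm : Measurable fun ω => (V ω, W ω) := hV.prodMk hW
  have hGint : Integrable (fun ω => (H (V ω) + ∑ j, h j (W ω j)) ^ 2) μ := by
    have h1 : Integrable (fun p => F p ^ 2) (μ.map fun ω => (V ω, W ω)) := hlaw ▸ hκint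
    exact (integrable_map_measure ((hFmeas.pow_const 2)).aestronglyMeasurable
      hTm.aemeasurable).mp h1
  have hae : ∀ᵐ ω ∂μ, (H (V ω) + ∑ j, h j (W ω j)) ^ 2 = 0 :=
    (integral_eq_zero_iff_of_nonneg (fun ω => sq_nonneg _) hGint).mp hzero
  have hFset : MeasurableSet {p : ℝ × (Fin d → ℝ) | F p = 0} :=
    measurableSet_eq_fun hFmeas measurable_const
  have haeκ : ∀ᵐ p ∂((volume : Measure (ℝ × (Fin d → ℝ))).withDensity
      fun p => ENNReal.ofReal (ρ p)), F p = 0 := by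
    rw [← hlaw, MeasureTheory.ae_map_iff hTm.aemeasurable hFset]
    exact hae.mono fun ω hω => pow_eq_zero_iff two_ne_zero |>.mp hω
  have haeB : ∀ᵐ p ∂(α.prod β), F p = 0 := by
    rw [← hrestr, ae_iff]
    have hrr : (volume.restrict B) {a : ℝ × (Fin d → ℝ) | ¬ F a = 0}
        = volume ({p : ℝ × (Fin d → ℝ) | F p = 0}ᶜ ∩ B) := Measure.restrict_apply hFset.compl
    rw [hrr]
    have hκN : (∫⁻ p in {p : ℝ × (Fin d → ℝ) | F p = 0}ᶜ, ENNReal.ofReal (ρ p)) = 0 := by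
      rw [← withDensity_apply _ hFset.compl]
      exact ae_iff.mp haeκ
    have h1 : ENNReal.ofReal m * volume ({p : ℝ × (Fin d → ℝ) | F p = 0}ᶜ ∩ B)
        ≤ ∫⁻ p in {p : ℝ × (Fin d → ℝ) | F p = 0}ᶜ, ENNReal.ofReal (ρ p) := by
      calc ENNReal.ofReal m * volume ({p : ℝ × (Fin d → ℝ) | F p = 0}ᶜ ∩ B)
          = ∫⁻ _ in {p : ℝ × (Fin d → ℝ) | F p = 0}ᶜ ∩ B, ENNReal.ofReal m := by
            rw [setLIntegral_const]
        _ ≤ ∫⁻ p in {p : ℝ × (Fin d → ℝ) | F p = 0}ᶜ ∩ B, ENNReal.ofReal (ρ p) :=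
            setLIntegral_mono hρm.ennreal_ofReal fun p hp =>
              ENNReal.ofReal_le_ofReal (hρbound p hp.2).1
        _ ≤ ∫⁻ p in {p : ℝ × (Fin d → ℝ) | F p = 0}ᶜ, ENNReal.ofReal (ρ p) :=
            lintegral_mono_set inter_subset_left
    rw [hκN, le_zero_iff, mul_eq_zero] at h1
    rcases h1 with h1 | h1
    · exact absurd h1 (by simp [ENNReal.ofReal_eq_zero, not_le, hm])
    · exact h1
  -- marginal facts
  have hgk_int : ∀ k, Integrable (fun w : Fin d → ℝ => h k (w k)) β := by
    intro k
    have h1 : Integrable (h k) (β.map fun w => w k) := by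
      rw [hβdef, aux_map_eval_pi]
      exact (hhL2 k).integrable one_le_two
    exact (integrable_map_measure (hhm k).aestronglyMeasurable
      (measurable_pi_apply k).aemeasurable).mp h1
  have hgk_val : ∀ k, ∫ w, h k (w k) ∂β = 0 := by
    intro k
    have h1 := integral_map (μ := β) (φ := fun w : Fin d → ℝ => w k)
      (measurable_pi_apply k).aemeasurable (hhm k).aestronglyMeasurable
    rw [hβdef, aux_map_eval_pi] at h1
    rw [← h1]
    exact hhmean k
  have hS_int : Integrable (fun w : Fin d → ℝ => ∑ j, h j (w j)) β :=
    integrable_finset_sum _ fun k _ => hgk_int k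
  have hS_val : ∫ w, (∑ j, h j (w j)) ∂β = 0 := by
    rw [integral_finset_sum _ fun k _ => hgk_int k]
    simp [hgk_val]
  -- conclusion 1
  have hae2 : ∀ᵐ v ∂α, ∀ᵐ w ∂β, H v + ∑ j, h j (w j) = 0 := Measure.ae_ae_of_ae_prod haeB
  have hH0 : ∀ᵐ v ∂α, H v = 0 := by
    refine hae2.mono fun v hv => ?_
    have h1 : ∫ w, (H v + ∑ j, h j (w j)) ∂β = 0 := integral_eq_zero_of_ae hv
    rw [integral_add (integrable_const _) hS_int, integral_const, hS_val, probReal_univ] at h1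
    simpa using h1
  -- S = 0 a.e. β
  have hswap : ∀ᵐ w ∂β, ∀ᵐ v ∂α, H v + ∑ j, h j (w j) = 0 := by
    have h1 : ∀ᵐ q ∂(β.prod α), F (q.2, q.1) = 0 := by
      have h2 := haeB
      rw [← Measure.prod_swap] at h2
      exact (MeasureTheory.ae_map_iff measurable_swap.aemeasurable hFset).mp h2
    exact Measure.ae_ae_of_ae_prod h1
  have hαne : α ≠ 0 := by
    intro h0
    have h1 : α univ = 0 := by rw [h0]; simp
    rw [hαdef, Measure.restrict_apply_univ, Real.volume_Icc, ENNReal.ofReal_eq_zero] at h1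
    linarith
  haveI : (ae α).NeBot := ae_neBot.2 hαne
  have hS0 : ∀ᵐ w ∂β, (∑ j, h j (w j)) = 0 := by
    refine hswap.mono fun w hw => ?_
    obtain ⟨v, hv1, hv2⟩ := (hw.and hH0).exists
    linarith
  refine ⟨hH0, fun j => ?_⟩
  -- integrability of cross terms
  have hcross_int : ∀ k, Integrable (fun w : Fin d → ℝ => h j (w j) * h k (w k)) β := by
    intro k
    rcases eq_or_ne k j with rfl | hkj
    · have h1 : Integrable (fun x => h k x * h k x) ν := by
        simpa [pow_two] using (hhL2 k).integrable_sq
      have h2 : Integrable (fun x => h k x * h k x) (β.map fun w => w k) := by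
        rw [hβdef, aux_map_eval_pi]; exact h1
      exact (integrable_map_measure ((hhm k).mul (hhm k)).aestronglyMeasurable
        (measurable_pi_apply k).aemeasurable).mp h2
    · have h1 : Integrable (fun p : ℝ × ℝ => h j p.1 * h k p.2) (ν.prod ν) :=
        Integrable.mul_prod ((hhL2 j).integrable one_le_two) ((hhL2 k).integrable one_le_two)
      have h2 : Integrable (fun p : ℝ × ℝ => h j p.1 * h k p.2)
          (β.map fun w => (w j, w k)) := by
        rw [hβdef, aux_map_pair_eval_pi _ hkj.symm]; exact h1
      exact (integrable_map_measure (((hhm j).comp measurable_fst).mul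
        ((hhm k).comp measurable_snd)).aestronglyMeasurable
        (((measurable_pi_apply j).prodMk (measurable_pi_apply k)).aemeasurable)).mp h2
  have hcross_val : ∀ k, k ≠ j → ∫ w, h j (w j) * h k (w k) ∂β = 0 := by
    intro k hkj
    have h1 := integral_map (μ := β) (φ := fun w : Fin d → ℝ => (w j, w k))
      (((measurable_pi_apply j).prodMk (measurable_pi_apply k)).aemeasurable)
      (show AEStronglyMeasurable (fun p : ℝ × ℝ => h j p.1 * h k p.2) _ from
        (((hhm j).comp measurable_fst).mul ((hhm k).comp measurable_snd)).aestronglyMeasurable)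
    rw [hβdef, aux_map_pair_eval_pi _ hkj.symm] at h1
    dsimp only at h1
    rw [← h1, integral_prod_mul]
    have h2 : ∫ x, h j x ∂ν = 0 := hhmean j
    rw [h2, zero_mul]
  have hdiag : ∫ x, h j x * h j x ∂ν = ∫ w, h j (w j) * h j (w j) ∂β := by
    have h1 := integral_map (μ := β) (φ := fun w : Fin d → ℝ => w j)
      (measurable_pi_apply j).aemeasurable
      (show AEStronglyMeasurable (fun x : ℝ => h j x * h j x) _ from
        ((hhm j).mul (hhm j)).aestronglyMeasurable)
    rw [hβdef, aux_map_eval_pi] at h1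
    exact h1
  have hzero2 : ∫ x, h j x * h j x ∂ν = 0 := by
    have e1 : ∫ w, (h j (w j) * ∑ k, h k (w k)) ∂β = 0 :=
      integral_eq_zero_of_ae (hS0.mono fun w hw => by simp [hw])
    have e2 : (fun w : Fin d → ℝ => h j (w j) * ∑ k, h k (w k))
        = fun w => ∑ k, h j (w j) * h k (w k) := funext fun w => Finset.mul_sum _ _ _
    rw [e2, integral_finset_sum _ fun k _ => hcross_int k,
      Finset.sum_eq_single_of_mem j (Finset.mem_univ j)
        (fun k _ hk => hcross_val k hk), ← hdiag] at e1
    exact e1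
  have hint : Integrable (fun x => h j x * h j x) ν := by
    simpa [pow_two] using (hhL2 j).integrable_sq
  have hfin : (fun x => h j x * h j x) =ᵐ[ν] 0 :=
    (integral_eq_zero_iff_of_nonneg (fun x => mul_self_nonneg _) hint).mp hzero2
  exact hfin.mono fun x hx => mul_self_eq_zero.mp hx
end

section
/- Let f : [a,b] → ℝ be continuously differentiable with ‖f‖_{L²(Leb)} ≤ δ and ‖f'‖_∞ ≤ L. Then ‖f‖_∞ ≤ max( (3L)^{1/3}·δ^{2/3}, 2δ/(b−a)^{1/2} )·C for a universal constant C; in particular, if ‖f_n‖_{L²} → 0 and sup_n ‖f_n'‖_∞ < ∞, then ‖f_n‖_∞ → 0. -/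
open Set intervalIntegral

lemma key_half (a b : ℝ) (hab : a < b) (f : ℝ → ℝ) (hf : Differentiable ℝ f)
    (δ L : ℝ) (hδ : 0 ≤ δ) (hL : 0 ≤ L)
    (hd : ∀ x ∈ Icc a b, |deriv f x| ≤ L)
    (hint : (∫ x in a..b, (f x) ^ 2) ≤ δ ^ 2)
    (x : ℝ) (hx : x ∈ Icc a b) (hmid : x ≤ (a + b) / 2) :
    |f x| ≤ 2 * max ((3 * L) ^ ((1:ℝ)/3) * δ ^ ((2:ℝ)/3))
      (2 * δ / (b - a) ^ ((1:ℝ)/2)) := by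
  set M := |f x| with hM
  have hM0 : 0 ≤ M := abs_nonneg _
  have hba : (0:ℝ) < b - a := by linarith
  have hsrp : (0:ℝ) < (b - a) ^ ((1:ℝ)/2) := Real.rpow_pos_of_pos hba _
  have hmaxnn : 0 ≤ max ((3 * L) ^ ((1:ℝ)/3) * δ ^ ((2:ℝ)/3))
      (2 * δ / (b - a) ^ ((1:ℝ)/2)) :=
    le_max_iff.2 (Or.inr (by positivity))
  rcases eq_or_lt_of_le hM0 with h0 | hMpos
  · rw [← h0]; positivity
  -- main integral bound
  have hc : Continuous fun t => (f t) ^ 2 := (hf.continuous.pow 2)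
  have hii : ∀ u v : ℝ, IntervalIntegrable (fun t => (f t) ^ 2) MeasureTheory.volume u v :=
    fun u v => hc.intervalIntegrable u v
  have main : ∀ h : ℝ, 0 < h → x + h ≤ b → L * h ≤ M / 2 → (M / 2) ^ 2 * h ≤ δ ^ 2 := by
    intro h hh hxb hLh
    have hIsub : Icc x (x + h) ⊆ Icc a b := Icc_subset_Icc hx.1 hxb
    have hpt : ∀ t ∈ Icc x (x + h), (M / 2) ^ 2 ≤ (f t) ^ 2 := by
      intro t ht
      have hmvt : ‖f t - f x‖ ≤ L * (t - x) :=
        norm_image_sub_le_of_norm_deriv_le_segment'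
          (fun y _ => (hf y).hasDerivAt.hasDerivWithinAt)
          (fun y hy => hd y (hIsub (Ico_subset_Icc_self hy))) t ht
      have habs : |f x| - |f t| ≤ |f t - f x| := by
        have := abs_sub_abs_le_abs_sub (f x) (f t)
        rwa [abs_sub_comm] at this
      have hLt : L * (t - x) ≤ L * h := by nlinarith [ht.2, ht.1]
      have h1 : M / 2 ≤ |f t| := by
        have : ‖f t - f x‖ = |f t - f x| := rfl
        rw [this] at hmvt
        linarith
      calc (M / 2) ^ 2 ≤ |f t| ^ 2 := pow_le_pow_left₀ (by positivity) h1 2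
        _ = (f t) ^ 2 := sq_abs _
    have h1 : (M / 2) ^ 2 * h ≤ ∫ t in x..(x + h), (f t) ^ 2 := by
      have := intervalIntegral.integral_mono_on (μ := MeasureTheory.volume)
        (f := fun _ => (M / 2) ^ 2) (g := fun t => (f t) ^ 2)
        (by linarith : x ≤ x + h) (intervalIntegrable_const) (hii x (x + h)) hpt
      simpa [intervalIntegral.integral_const, smul_eq_mul, mul_comm] using this
    have h2 : (∫ t in x..(x + h), (f t) ^ 2) ≤ ∫ t in a..b, (f t) ^ 2 := by
      have e1 := intervalIntegral.integral_add_adjacent_intervals (hii a x) (hii x (x + h))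
      have e2 := intervalIntegral.integral_add_adjacent_intervals (hii a (x + h)) (hii (x + h) b)
      have n1 : 0 ≤ ∫ t in a..x, (f t) ^ 2 :=
        intervalIntegral.integral_nonneg hx.1 (fun t _ => sq_nonneg _)
      have n2 : 0 ≤ ∫ t in (x + h)..b, (f t) ^ 2 :=
        intervalIntegral.integral_nonneg hxb (fun t _ => sq_nonneg _)
      linarith
    linarith
  set ℓ := (b - a) / 2 with hℓdef
  have hℓ : 0 < ℓ := by positivity
  have hxℓ : x + ℓ ≤ b := by
    rw [hℓdef]; linarith
  by_cases hcase : L * ℓ ≤ M / 2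
  · -- flat case
    have hmm := main ℓ hℓ hxℓ hcase
    set s := (b - a) ^ ((1:ℝ)/2) with hs
    have hs2 : s ^ 2 = b - a := by
      rw [hs, ← Real.rpow_natCast ((b - a) ^ ((1:ℝ)/2)) 2, ← Real.rpow_mul hba.le]
      norm_num
    have hMs : M ≤ 4 * δ / s := by
      rw [le_div_iff₀ hsrp]
      have h2 : (M * s) ^ 2 ≤ (4 * δ) ^ 2 := by rw [mul_pow, hs2]; nlinarith
      exact le_of_pow_le_pow_left₀ two_ne_zero (by positivity) h2
    calc M ≤ 2 * (2 * δ / s) := by rw [show 2 * (2 * δ / s) = 4 * δ / s by ring]; exact hMs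

      _ ≤ 2 * max ((3 * L) ^ ((1:ℝ)/3) * δ ^ ((2:ℝ)/3)) (2 * δ / s) := by
          have := le_max_right ((3 * L) ^ ((1:ℝ)/3) * δ ^ ((2:ℝ)/3)) (2 * δ / s)
          linarith
  · push_neg at hcase
    have hLpos : 0 < L := by nlinarith
    set h := M / (2 * L) with hhdef
    have hh : 0 < h := by positivity
    have hhℓ : h ≤ ℓ := by
      rw [hhdef, div_le_iff₀ (by positivity)]
      nlinarith
    have hLh : L * h = M / 2 := by
      rw [hhdef]; field_simp
    have hmm := main h hh (by linarith) (le_of_eq hLh)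
    have hM3 : M ^ 3 ≤ 8 * L * δ ^ 2 := by
      rw [hhdef] at hmm
      have : (M / 2) ^ 2 * (M / (2 * L)) = M ^ 3 / (8 * L) := by ring
      rw [this, div_le_iff₀ (by positivity)] at hmm
      nlinarith
    set K := 2 * ((3 * L) ^ ((1:ℝ)/3) * δ ^ ((2:ℝ)/3)) with hK
    have hKnn : 0 ≤ K := by positivity
    have e1 : ((3 * L) ^ ((1:ℝ)/3)) ^ (3:ℕ) = 3 * L := by
      rw [← Real.rpow_natCast ((3 * L) ^ ((1:ℝ)/3)) 3, ← Real.rpow_mul (by linarith)]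
      norm_num
    have e2 : (δ ^ ((2:ℝ)/3)) ^ (3:ℕ) = δ ^ 2 := by
      rw [← Real.rpow_natCast (δ ^ ((2:ℝ)/3)) 3, ← Real.rpow_mul hδ]
      norm_num
    have hK3 : K ^ 3 = 8 * (3 * L) * δ ^ 2 := by
      rw [hK, mul_pow, mul_pow, e1, e2]; ring
    have hMK : M ^ 3 ≤ K ^ 3 := by
      rw [hK3]; nlinarith [sq_nonneg δ, hLpos.le]
    have hMK' : M ≤ K := le_of_pow_le_pow_left₀ (by norm_num) hKnn hMK
    calc M ≤ K := hMK'
      _ ≤ 2 * max ((3 * L) ^ ((1:ℝ)/3) * δ ^ ((2:ℝ)/3)) (2 * δ / (b - a) ^ ((1:ℝ)/2)) := by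
          rw [hK]
          have := le_max_left ((3 * L) ^ ((1:ℝ)/3) * δ ^ ((2:ℝ)/3))
            (2 * δ / (b - a) ^ ((1:ℝ)/2))
          linarith

lemma key_full (a b : ℝ) (hab : a < b) (f : ℝ → ℝ) (hf : Differentiable ℝ f)
    (δ L : ℝ) (hδ : 0 ≤ δ) (hL : 0 ≤ L)
    (hd : ∀ x ∈ Icc a b, |deriv f x| ≤ L)
    (hint : (∫ x in a..b, (f x) ^ 2) ≤ δ ^ 2)
    (x : ℝ) (hx : x ∈ Icc a b) :
    |f x| ≤ 2 * max ((3 * L) ^ ((1:ℝ)/3) * δ ^ ((2:ℝ)/3))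
      (2 * δ / (b - a) ^ ((1:ℝ)/2)) := by
  by_cases hmid : x ≤ (a + b) / 2
  · exact key_half a b hab f hf δ L hδ hL hd hint x hx hmid
  · push_neg at hmid
    set g := fun t => f (a + b - t) with hgdef
    have hg : Differentiable ℝ g :=
      hf.comp ((differentiable_const (a + b)).sub differentiable_id)
    have hgd : ∀ y ∈ Icc a b, |deriv g y| ≤ L := by
      intro y hy
      have : deriv g y = -deriv f (a + b - y) := deriv_comp_const_sub f (a + b) y
      rw [this, abs_neg]
      exact hd _ ⟨by linarith [hy.2], by linarith [hy.1]⟩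
    have hgint : (∫ t in a..b, (g t) ^ 2) = ∫ t in a..b, (f t) ^ 2 := by
      have := intervalIntegral.integral_comp_sub_left (a := a) (b := b)
        (fun t => (f t) ^ 2) (a + b)
      simpa using this
    have hx' : a + b - x ∈ Icc a b := ⟨by linarith [hx.2], by linarith [hx.1]⟩
    have hmid' : a + b - x ≤ (a + b) / 2 := by linarith
    have := key_half a b hab g hg δ L hδ hL hgd (by rw [hgint]; exact hint)
      (a + b - x) hx' hmid'
    simpa [hgdef, sub_sub_cancel] using this

theorem sup_norm_interpolation :
    ∃ C : ℝ, 0 < C ∧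
      (∀ (a b : ℝ), a < b → ∀ (f : ℝ → ℝ), Differentiable ℝ f →
        ∀ (δ L : ℝ), 0 ≤ δ → 0 ≤ L →
        (∀ x ∈ Icc a b, |deriv f x| ≤ L) →
        (∫ x in a..b, (f x) ^ 2) ≤ δ ^ 2 →
        ∀ x ∈ Icc a b,
          |f x| ≤ C * max ((3 * L) ^ ((1:ℝ)/3) * δ ^ ((2:ℝ)/3))
            (2 * δ / (b - a) ^ ((1:ℝ)/2))) ∧
      (∀ (a b : ℝ), a < b → ∀ (fseq : ℕ → ℝ → ℝ), (∀ n, Differentiable ℝ (fseq n)) →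
        ∀ L' : ℝ, (∀ n, ∀ x ∈ Icc a b, |deriv (fseq n) x| ≤ L') →
        Filter.Tendsto (fun n => ∫ x in a..b, (fseq n x) ^ 2)
          Filter.atTop (nhds 0) →
        ∀ ε : ℝ, 0 < ε → ∃ N : ℕ, ∀ n ≥ N, ∀ x ∈ Icc a b, |fseq n x| ≤ ε) := by
  refine ⟨2, by norm_num, ?_, ?_⟩
  · intro a b hab f hf δ L hδ hL hd hint x hx
    exact key_full a b hab f hf δ L hδ hL hd hint x hx
  · intro a b hab fseq hfseq L' hd htend ε hε
    have hL' : 0 ≤ L' := le_trans (abs_nonneg _) (hd 0 a ⟨le_refl a, hab.le⟩)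
    set I : ℕ → ℝ := fun n => ∫ x in a..b, (fseq n x) ^ 2 with hIdef
    have hInn : ∀ n, 0 ≤ I n :=
      fun n => intervalIntegral.integral_nonneg hab.le (fun t _ => sq_nonneg _)
    set dn : ℕ → ℝ := fun n => Real.sqrt (I n) with hdndef
    have hdn0 : ∀ n, 0 ≤ dn n := fun n => Real.sqrt_nonneg _
    have hdnt : Filter.Tendsto dn Filter.atTop (nhds 0) := by
      have := (Real.continuous_sqrt.tendsto 0).comp htend
      simpa [hdndef, Function.comp_def] using this
    have h23 : Filter.Tendsto (fun n => (dn n) ^ ((2:ℝ)/3)) Filter.atTop (nhds 0) := by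
      have hc : ContinuousAt (fun y : ℝ => y ^ ((2:ℝ)/3)) 0 :=
        Real.continuousAt_rpow_const 0 _ (Or.inr (by norm_num))
      have := hc.tendsto.comp hdnt
      simpa [Function.comp_def, Real.zero_rpow (by norm_num : ((2:ℝ)/3) ≠ 0)] using this
    set k1 := (3 * L') ^ ((1:ℝ)/3) with hk1
    set s := (b - a) ^ ((1:ℝ)/2) with hs
    have t1 : Filter.Tendsto (fun n => k1 * (dn n) ^ ((2:ℝ)/3))
        Filter.atTop (nhds (k1 * 0)) := h23.const_mul k1
    have t2 : Filter.Tendsto (fun n => 2 * dn n / s) Filter.atTop (nhds (2 * 0 / s)) :=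
      (hdnt.const_mul 2).div_const s
    have t3 : Filter.Tendsto
        (fun n => 2 * max (k1 * (dn n) ^ ((2:ℝ)/3)) (2 * dn n / s))
        Filter.atTop (nhds (2 * max (k1 * 0) (2 * 0 / s))) :=
      (t1.max t2).const_mul 2
    have hlim : (2 : ℝ) * max (k1 * 0) (2 * 0 / s) = 0 := by simp
    rw [hlim] at t3
    have hev : ∀ᶠ n in Filter.atTop,
        2 * max (k1 * (dn n) ^ ((2:ℝ)/3)) (2 * dn n / s) < ε :=
      t3.eventually_lt_const hε
    rcases Filter.eventually_atTop.mp hev with ⟨N, hN⟩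
    refine ⟨N, fun n hn x hx => ?_⟩
    have hint : (∫ x in a..b, (fseq n x) ^ 2) ≤ (dn n) ^ 2 := by
      rw [hdndef]
      simp only []
      rw [Real.sq_sqrt (hInn n)]
    have := key_full a b hab (fseq n) (hfseq n) (dn n) L' (hdn0 n) hL'
      (hd n) hint x hx
    exact le_trans this (le_of_lt (hN n hn))
end
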